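/- Let ρ_{AB} = ρ_A ⊗ ρ_B be a product density matrix on H_A ⊗ H_B and σ_{AB} positive definite on H_A ⊗ H_B, with 1 < α ≤ 2 and α/2 ≤ z ≤ α. If σ_{AB}^{(1−α)/(2z)} (σ_{AB}^{(1−α)/(2z)} ρ_{AB}^{α/z} σ_{AB}^{(1−α)/(2z)})^{z−1} σ_{AB}^{(1−α)/(2z)} = σ_A^{(1−α)/(2z)} (σ_A^{(1−α)/(2z)} ρ_A^{α/z} σ_A^{(1−α)/(2z)})^{z−1} σ_A^{(1−α)/(2z)} ⊗ 𝟙_B, then D_{α,z}(ρ_{AB} ‖ σ_{AB}) = D_{α,z}(ρ_A ‖ σ_A) + (1/(α−1)) log Tr(ρ_B^{α/z}). -/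

import Mathlib

open Matrix
open scoped ComplexOrder

-- Real power of a (Hermitian) matrix via the spectral functional calculus;
-- junk value `0` for non-Hermitian matrices.
open Classical in
noncomputable def mpow {n : Type*} [Fintype n] [DecidableEq n]
    (A : Matrix n n ℂ) (r : ℝ) : Matrix n n ℂ :=
  if h : A.IsHermitian then h.cfc (fun x => x ^ r) else 0

open Kronecker

/-- Partial trace over the second tensor factor. -/
noncomputable def ptraceB {nA nB : Type*} [Fintype nB]
    (M : Matrix (nA × nB) (nA × nB) ℂ) : Matrix nA nA ℂ :=
  Matrix.of fun i j => ∑ b : nB, M (i, b) (j, b)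

section Aux

open Polynomial
set_option linter.unusedSectionVars false

variable {m : Type*} [Fintype m] [DecidableEq m]

noncomputable def uconj (W M : Matrix m m ℂ) : Matrix m m ℂ := W * M * Wᴴ

lemma uconj_mul {W : Matrix m m ℂ} (hW' : Wᴴ * W = 1) (M N : Matrix m m ℂ) :
    uconj W M * uconj W N = uconj W (M * N) := by
  unfold uconj
  have h : W * M * Wᴴ * (W * N * Wᴴ) = W * (M * ((Wᴴ * W) * N)) * Wᴴ := by
    simp only [mul_assoc]
  rw [h, hW', one_mul, ← mul_assoc]

lemma uconj_one {W : Matrix m m ℂ} (hW : W * Wᴴ = 1) : uconj W 1 = 1 := by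
  simp [uconj, hW]

lemma uconj_smul (W : Matrix m m ℂ) (a : ℂ) (M : Matrix m m ℂ) :
    uconj W (a • M) = a • uconj W M := by
  simp [uconj, Matrix.mul_smul, Matrix.smul_mul]

lemma uconj_sum (W : Matrix m m ℂ) {ι : Type*} (s : Finset ι) (f : ι → Matrix m m ℂ) :
    uconj W (∑ i ∈ s, f i) = ∑ i ∈ s, uconj W (f i) := by
  simp [uconj, Finset.mul_sum, Finset.sum_mul]

lemma uconj_pow {W : Matrix m m ℂ} (hW : W * Wᴴ = 1) (hW' : Wᴴ * W = 1)
    (M : Matrix m m ℂ) (n : ℕ) : (uconj W M) ^ n = uconj W (M ^ n) := by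
  induction n with
  | zero => simp [uconj_one hW]
  | succ k ih => rw [pow_succ, ih, uconj_mul hW', pow_succ]

set_option linter.unusedSectionVars false

lemma isHermitian_uconj_diag (W : Matrix m m ℂ) (d : m → ℝ) :
    (uconj W (diagonal (Complex.ofReal ∘ d))).IsHermitian := by
  have hd : (star (Complex.ofReal ∘ d) : m → ℂ) = Complex.ofReal ∘ d := by
    funext i
    simp [Pi.star_apply, Complex.conj_ofReal]
  unfold uconj Matrix.IsHermitian
  rw [conjTranspose_mul, conjTranspose_mul, conjTranspose_conjTranspose,
    diagonal_conjTranspose, hd, mul_assoc]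

lemma isUnit_conjT {B : Matrix m m ℂ} (hB : IsUnit B) : IsUnit Bᴴ := by
  obtain ⟨u, rfl⟩ := hB
  exact ⟨⟨(u : Matrix m m ℂ)ᴴ, ((u⁻¹ : (Matrix m m ℂ)ˣ) : Matrix m m ℂ)ᴴ,
    by rw [← conjTranspose_mul, u.inv_mul, conjTranspose_one],
    by rw [← conjTranspose_mul, u.mul_inv, conjTranspose_one]⟩, rfl⟩

lemma posDef_conj {A : Matrix m m ℂ} (hA : A.PosDef) {B : Matrix m m ℂ} (hB : IsUnit B) :
    (B * A * Bᴴ).PosDef := by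
  refine Matrix.posDef_iff_dotProduct_mulVec.mpr ⟨?_, fun x hx => ?_⟩
  · have := Matrix.isHermitian_conjTranspose_mul_mul Bᴴ hA.1
    simpa [conjTranspose_conjTranspose] using this
  · have hBx : Bᴴ *ᵥ x ≠ 0 := by
      intro h0
      apply hx
      have hinj := Matrix.mulVec_injective_iff_isUnit.mpr (isUnit_conjT hB)
      apply hinj
      simp [h0, Matrix.mulVec_zero]
    have := hA.dotProduct_mulVec_pos hBx
    simpa only [star_mulVec, conjTranspose_conjTranspose, Matrix.dotProduct_mulVec,
      vecMul_vecMul, mulVec_mulVec, mul_assoc] using this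

lemma posDef_uconj_diag {W : Matrix m m ℂ} (hWu : IsUnit W) {d : m → ℝ}
    (hd : ∀ i, 0 < d i) : (uconj W (diagonal (Complex.ofReal ∘ d))).PosDef := by
  have hdiag : (diagonal (Complex.ofReal ∘ d) : Matrix m m ℂ).PosDef := by
    rw [Matrix.posDef_diagonal_iff]
    intro i
    simpa using Complex.zero_lt_real.mpr (hd i)
  exact posDef_conj hdiag hWu

lemma aeval_uconj_diag {W : Matrix m m ℂ} (hW : W * Wᴴ = 1) (hW' : Wᴴ * W = 1)
    (c : m → ℂ) (p : Polynomial ℂ) :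
    Polynomial.aeval (uconj W (diagonal c)) p =
      uconj W (diagonal fun i => p.eval (c i)) := by
  rw [Polynomial.aeval_eq_sum_range]
  have h1 : ∀ i : ℕ, p.coeff i • (uconj W (diagonal c)) ^ i
      = uconj W (diagonal (p.coeff i • c ^ i)) := by
    intro i
    rw [uconj_pow hW hW', Matrix.diagonal_pow, Matrix.diagonal_smul, uconj_smul]
  simp_rw [h1]
  rw [← uconj_sum]
  rw [show ∀ v : ℕ → m → ℂ, ∑ i ∈ Finset.range (p.natDegree + 1), diagonal (v i)
      = diagonal (∑ i ∈ Finset.range (p.natDegree + 1), v i) from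
    fun v => (map_sum (Matrix.diagonalAddMonoidHom m ℂ) v _).symm]
  have h2 : (∑ i ∈ Finset.range (p.natDegree + 1), p.coeff i • c ^ i)
      = fun j => p.eval (c j) := by
    funext j
    rw [Polynomial.eval_eq_sum_range]
    simp [Finset.sum_apply]
  rw [h2]

lemma cfc_decomp {M W : Matrix m m ℂ} (hM : M.IsHermitian)
    (hW : W * Wᴴ = 1) (hW' : Wᴴ * W = 1) {d : m → ℝ}
    (hMeq : M = uconj W (diagonal (Complex.ofReal ∘ d))) (f : ℝ → ℝ) :
    hM.cfc f = uconj W (diagonal (Complex.ofReal ∘ f ∘ d)) := by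
  classical
  have hofReal : (RCLike.ofReal : ℝ → ℂ) = Complex.ofReal := by funext x; rfl
  set U : Matrix m m ℂ := (Matrix.IsHermitian.eigenvectorUnitary hM : Matrix m m ℂ) with hUdef
  have hU : U * Uᴴ = 1 := by
    rw [← star_eq_conjTranspose]
    exact Matrix.mem_unitaryGroup_iff.mp (Matrix.IsHermitian.eigenvectorUnitary hM).2
  have hU' : Uᴴ * U = 1 := by
    rw [← star_eq_conjTranspose]
    exact Matrix.mem_unitaryGroup_iff'.mp (Matrix.IsHermitian.eigenvectorUnitary hM).2
  have hspec : M = uconj U (diagonal (Complex.ofReal ∘ hM.eigenvalues)) := by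
    rw [uconj, ← star_eq_conjTranspose, ← hofReal]
    exact hM.spectral_theorem
  set s : Finset ℝ := Finset.image d Finset.univ ∪ Finset.image hM.eigenvalues Finset.univ
    with hs
  set q : Polynomial ℝ := Lagrange.interpolate s id f with hqdef
  have hqeval : ∀ x ∈ s, q.eval x = f x := fun x hx =>
    Lagrange.eval_interpolate_at_node (v := id) (r := f) (Set.injOn_id _) hx
  set qc : Polynomial ℂ := q.map (algebraMap ℝ ℂ) with hqc
  have heval : ∀ x ∈ s, qc.eval ((x : ℝ) : ℂ) = Complex.ofReal (f x) := by
    intro x hx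
    rw [hqc, Polynomial.eval_map, show ((x : ℝ) : ℂ) = algebraMap ℝ ℂ x from rfl,
      Polynomial.eval₂_at_apply, hqeval x hx]
    rfl
  have key1 : Polynomial.aeval M qc = uconj W (diagonal (Complex.ofReal ∘ f ∘ d)) := by
    rw [hMeq, aeval_uconj_diag hW hW']
    have : (fun i => qc.eval ((Complex.ofReal ∘ d) i)) = Complex.ofReal ∘ f ∘ d := by
      funext i
      exact heval (d i) (Finset.mem_union_left _ (Finset.mem_image_of_mem d (Finset.mem_univ i)))
    rw [this]
  have key2 : Polynomial.aeval M qc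
      = uconj U (diagonal (Complex.ofReal ∘ f ∘ hM.eigenvalues)) := by
    conv_lhs => rw [hspec]
    rw [aeval_uconj_diag hU hU']
    have : (fun i => qc.eval ((Complex.ofReal ∘ hM.eigenvalues) i))
        = Complex.ofReal ∘ f ∘ hM.eigenvalues := by
      funext i
      exact heval (hM.eigenvalues i)
        (Finset.mem_union_right _ (Finset.mem_image_of_mem _ (Finset.mem_univ i)))
    rw [this]
  have hcfc : hM.cfc f = uconj U (diagonal (Complex.ofReal ∘ f ∘ hM.eigenvalues)) := by
    rw [Matrix.IsHermitian.cfc, hofReal, uconj, Unitary.conjStarAlgAut_apply, star_eq_conjTranspose]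
  rw [hcfc, ← key2, key1]

lemma mpow_decomp {M W : Matrix m m ℂ}
    (hW : W * Wᴴ = 1) (hW' : Wᴴ * W = 1) {d : m → ℝ}
    (hMeq : M = uconj W (diagonal (Complex.ofReal ∘ d))) (r : ℝ) :
    mpow M r = uconj W (diagonal (Complex.ofReal ∘ (fun x => x ^ r) ∘ d)) := by
  have hM : M.IsHermitian := hMeq ▸ isHermitian_uconj_diag W d
  rw [mpow, dif_pos hM, cfc_decomp hM hW hW' hMeq]

lemma eigU_mul {M : Matrix m m ℂ} (hM : M.IsHermitian) :
    (hM.eigenvectorUnitary : Matrix m m ℂ) * (hM.eigenvectorUnitary : Matrix m m ℂ)ᴴ = 1 := by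
  rw [← star_eq_conjTranspose]
  exact Matrix.mem_unitaryGroup_iff.mp (Matrix.IsHermitian.eigenvectorUnitary hM).2

lemma eigU_mul' {M : Matrix m m ℂ} (hM : M.IsHermitian) :
    (hM.eigenvectorUnitary : Matrix m m ℂ)ᴴ * (hM.eigenvectorUnitary : Matrix m m ℂ) = 1 := by
  rw [← star_eq_conjTranspose]
  exact Matrix.mem_unitaryGroup_iff'.mp (Matrix.IsHermitian.eigenvectorUnitary hM).2

lemma spectral_decomp {M : Matrix m m ℂ} (hM : M.IsHermitian) :
    M = uconj (hM.eigenvectorUnitary : Matrix m m ℂ)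
      (diagonal (Complex.ofReal ∘ hM.eigenvalues)) := by
  have hofReal : (RCLike.ofReal : ℝ → ℂ) = Complex.ofReal := by funext x; rfl
  rw [uconj, ← star_eq_conjTranspose, ← hofReal]
  exact hM.spectral_theorem

lemma mpow_spectral {M : Matrix m m ℂ} (hM : M.IsHermitian) (r : ℝ) :
    mpow M r = uconj (hM.eigenvectorUnitary : Matrix m m ℂ)
      (diagonal (Complex.ofReal ∘ (fun x => x ^ r) ∘ hM.eigenvalues)) :=
  mpow_decomp (eigU_mul hM) (eigU_mul' hM) (spectral_decomp hM) r

lemma mpow_posDef {A : Matrix m m ℂ} (hA : A.PosDef) (r : ℝ) : (mpow A r).PosDef := by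
  rw [mpow_spectral hA.1]
  refine posDef_uconj_diag ⟨⟨_, _, eigU_mul hA.1, eigU_mul' hA.1⟩, rfl⟩ fun i => ?_
  exact Real.rpow_pos_of_pos (hA.eigenvalues_pos i) r

lemma mpow_add {A : Matrix m m ℂ} (hA : A.PosDef) (r s : ℝ) :
    mpow A r * mpow A s = mpow A (r + s) := by
  rw [mpow_spectral hA.1 r, mpow_spectral hA.1 s, mpow_spectral hA.1 (r + s),
    uconj_mul (eigU_mul' hA.1), diagonal_mul_diagonal]
  refine congrArg _ (congrArg diagonal (funext fun i => ?_))
  simp only [Function.comp_apply]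
  rw [← Complex.ofReal_mul]
  exact congrArg Complex.ofReal (Real.rpow_add (hA.eigenvalues_pos i) r s).symm

lemma mpow_one {A : Matrix m m ℂ} (hA : A.PosDef) : mpow A 1 = A := by
  rw [mpow_spectral hA.1]
  have : (Complex.ofReal ∘ (fun x : ℝ => x ^ (1 : ℝ)) ∘ hA.1.eigenvalues)
      = Complex.ofReal ∘ hA.1.eigenvalues := by
    funext i; simp [Real.rpow_one]
  rw [this, ← spectral_decomp hA.1]

lemma trace_uconj {W : Matrix m m ℂ} (hW' : Wᴴ * W = 1) (D : Matrix m m ℂ) :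
    (uconj W D).trace = D.trace := by
  rw [uconj, trace_mul_cycle, hW', one_mul]

lemma mpow_trace {M : Matrix m m ℂ} (hM : M.IsHermitian) (r : ℝ) :
    (mpow M r).trace = Complex.ofReal (∑ i, hM.eigenvalues i ^ r) := by
  rw [mpow_spectral hM, trace_uconj (eigU_mul' hM), trace_diagonal, Complex.ofReal_sum]
  rfl

section Kron

open Kronecker

variable {nA nB : Type*} [Fintype nA] [DecidableEq nA] [Fintype nB] [DecidableEq nB]

lemma kron_conjT (A : Matrix nA nA ℂ) (B : Matrix nB nB ℂ) :
    (A ⊗ₖ B)ᴴ = Aᴴ ⊗ₖ Bᴴ := by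
  ext ⟨i, j⟩ ⟨k, l⟩
  simp [Matrix.conjTranspose_apply, Matrix.kroneckerMap_apply, mul_comm]

lemma kron_decomp {A : Matrix nA nA ℂ} {B : Matrix nB nB ℂ}
    (hA : A.IsHermitian) (hB : B.IsHermitian) :
    A ⊗ₖ B = uconj ((hA.eigenvectorUnitary : Matrix nA nA ℂ)
        ⊗ₖ (hB.eigenvectorUnitary : Matrix nB nB ℂ))
      (diagonal (Complex.ofReal ∘ fun p : nA × nB =>
        hA.eigenvalues p.1 * hB.eigenvalues p.2)) := by
  conv_lhs => rw [spectral_decomp hA, spectral_decomp hB]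
  rw [uconj, uconj, uconj, Matrix.mul_kronecker_mul, Matrix.mul_kronecker_mul, kron_conjT]
  congr 1
  rw [Matrix.diagonal_kronecker_diagonal]
  have h : (fun mn : nA × nB => (Complex.ofReal ∘ hA.eigenvalues) mn.1
        * (Complex.ofReal ∘ hB.eigenvalues) mn.2)
      = (Complex.ofReal ∘ fun p : nA × nB => hA.eigenvalues p.1 * hB.eigenvalues p.2) :=
    funext fun p => (Complex.ofReal_mul _ _).symm
  rw [h]

lemma kron_unitary_mul {A : Matrix nA nA ℂ} {B : Matrix nB nB ℂ}
    (hA : A.IsHermitian) (hB : B.IsHermitian) :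
    ((hA.eigenvectorUnitary : Matrix nA nA ℂ) ⊗ₖ (hB.eigenvectorUnitary : Matrix nB nB ℂ))
      * ((hA.eigenvectorUnitary : Matrix nA nA ℂ)
        ⊗ₖ (hB.eigenvectorUnitary : Matrix nB nB ℂ))ᴴ = 1 := by
  rw [kron_conjT, ← Matrix.mul_kronecker_mul, eigU_mul hA, eigU_mul hB,
    Matrix.one_kronecker_one]

lemma kron_unitary_mul' {A : Matrix nA nA ℂ} {B : Matrix nB nB ℂ}
    (hA : A.IsHermitian) (hB : B.IsHermitian) :
    ((hA.eigenvectorUnitary : Matrix nA nA ℂ)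
        ⊗ₖ (hB.eigenvectorUnitary : Matrix nB nB ℂ))ᴴ
      * ((hA.eigenvectorUnitary : Matrix nA nA ℂ)
        ⊗ₖ (hB.eigenvectorUnitary : Matrix nB nB ℂ)) = 1 := by
  rw [kron_conjT, ← Matrix.mul_kronecker_mul, eigU_mul' hA, eigU_mul' hB,
    Matrix.one_kronecker_one]

lemma posDef_kron {A : Matrix nA nA ℂ} {B : Matrix nB nB ℂ}
    (hA : A.PosDef) (hB : B.PosDef) : (A ⊗ₖ B).PosDef := by
  rw [kron_decomp hA.1 hB.1]
  exact posDef_uconj_diag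
    ⟨⟨_, _, kron_unitary_mul hA.1 hB.1, kron_unitary_mul' hA.1 hB.1⟩, rfl⟩
    fun p => mul_pos (hA.eigenvalues_pos p.1) (hB.eigenvalues_pos p.2)

lemma mpow_kron {A : Matrix nA nA ℂ} {B : Matrix nB nB ℂ}
    (hA : A.PosDef) (hB : B.PosDef) (r : ℝ) :
    mpow (A ⊗ₖ B) r = mpow A r ⊗ₖ mpow B r := by
  rw [mpow_decomp (kron_unitary_mul hA.1 hB.1) (kron_unitary_mul' hA.1 hB.1)
    (kron_decomp hA.1 hB.1) r, mpow_spectral hA.1, mpow_spectral hB.1,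
    uconj, uconj, uconj, Matrix.mul_kronecker_mul, Matrix.mul_kronecker_mul, kron_conjT]
  congr 1
  congr 1
  rw [Matrix.diagonal_kronecker_diagonal]
  have h : (Complex.ofReal ∘ (fun x => x ^ r)
        ∘ fun p : nA × nB => hA.1.eigenvalues p.1 * hB.1.eigenvalues p.2)
      = (fun mn : nA × nB => (Complex.ofReal ∘ (fun x => x ^ r) ∘ hA.1.eigenvalues) mn.1
        * (Complex.ofReal ∘ (fun x => x ^ r) ∘ hB.1.eigenvalues) mn.2) := by
    funext p
    simp only [Function.comp_apply]
    rw [← Complex.ofReal_mul]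
    exact congrArg Complex.ofReal
      (Real.mul_rpow (hA.eigenvalues_pos p.1).le (hB.eigenvalues_pos p.2).le)
  rw [h]

end Kron


end Aux

/-- Sufficiency for product states: if `ρ_AB = ρ_A ⊗ ρ_B` is a product density matrix and the
algebraic condition holds, then `D_{α,z}(ρ_AB‖σ_AB) = D_{α,z}(ρ_A‖σ_A) + (1/(α-1)) log Tr ρ_B^{α/z}`. -/
theorem renyi_product_state_sufficiency {nA nB : Type*}
    [Fintype nA] [DecidableEq nA] [Fintype nB] [DecidableEq nB]
    (ρA : Matrix nA nA ℂ) (ρB : Matrix nB nB ℂ)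
    (hρA : ρA.PosDef) (hρB : ρB.PosDef) (hρAtr : ρA.trace = 1) (hρBtr : ρB.trace = 1)
    (σAB : Matrix (nA × nB) (nA × nB) ℂ) (hσAB : σAB.PosDef) (hσA : (ptraceB σAB).PosDef)
    (α z : ℝ) (hα1 : 1 < α) (hα2 : α ≤ 2) (hz1 : α / 2 ≤ z) (hz2 : z ≤ α)
    (hcond :
      mpow σAB ((1 - α) / (2 * z)) *
          mpow (mpow σAB ((1 - α) / (2 * z)) * mpow (ρA ⊗ₖ ρB) (α / z) *
            mpow σAB ((1 - α) / (2 * z))) (z - 1) *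
        mpow σAB ((1 - α) / (2 * z)) =
      (mpow (ptraceB σAB) ((1 - α) / (2 * z)) *
          mpow (mpow (ptraceB σAB) ((1 - α) / (2 * z)) * mpow ρA (α / z) *
            mpow (ptraceB σAB) ((1 - α) / (2 * z))) (z - 1) *
        mpow (ptraceB σAB) ((1 - α) / (2 * z))) ⊗ₖ (1 : Matrix nB nB ℂ)) :
    (1 / (α - 1)) * Real.log
        ((mpow (mpow σAB ((1 - α) / (2 * z)) * mpow (ρA ⊗ₖ ρB) (α / z) *
          mpow σAB ((1 - α) / (2 * z))) z).trace).re =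
      (1 / (α - 1)) * Real.log
          ((mpow (mpow (ptraceB σAB) ((1 - α) / (2 * z)) * mpow ρA (α / z) *
            mpow (ptraceB σAB) ((1 - α) / (2 * z))) z).trace).re +
        (1 / (α - 1)) * Real.log ((mpow ρB (α / z)).trace).re := by
  
  have hnA : Nonempty nA := by
    by_contra h
    rw [not_nonempty_iff] at h
    exact absurd hρAtr (by simp [Matrix.trace])
  have hnB : Nonempty nB := by
    by_contra h
    rw [not_nonempty_iff] at h
    exact absurd hρBtr (by simp [Matrix.trace])
  set S := mpow σAB ((1 - α) / (2 * z)) with hSdef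
  set K := mpow (ρA ⊗ₖ ρB) (α / z) with hKdef
  set T := mpow (ptraceB σAB) ((1 - α) / (2 * z)) with hTdef
  set RA := mpow ρA (α / z) with hRAdef
  set RB := mpow ρB (α / z) with hRBdef
  set X := S * K * S with hXdef
  set Y := T * RA * T with hYdef
  have hSpd : S.PosDef := mpow_posDef hσAB _
  have hTpd : T.PosDef := mpow_posDef hσA _
  have hRApd : RA.PosDef := mpow_posDef hρA _
  have hRBpd : RB.PosDef := mpow_posDef hρB _
  have hABpd : (ρA ⊗ₖ ρB).PosDef := posDef_kron hρA hρB
  have hKpd : K.PosDef := mpow_posDef hABpd _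
  have hXpd : X.PosDef := by
    have h := posDef_conj hKpd hSpd.isUnit
    rwa [Matrix.IsHermitian.eq hSpd.1] at h
  have hYpd : Y.PosDef := by
    have h := posDef_conj hRApd hTpd.isUnit
    rwa [Matrix.IsHermitian.eq hTpd.1] at h
  have hKkron : K = RA ⊗ₖ RB := by
    rw [hKdef, mpow_kron hρA hρB]
  have hXz : mpow X z = X * mpow X (z - 1) := by
    have h := mpow_add hXpd 1 (z - 1)
    rw [mpow_one hXpd, show (1 : ℝ) + (z - 1) = z by ring] at h
    exact h.symm
  have hYz : mpow Y z = Y * mpow Y (z - 1) := by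
    have h := mpow_add hYpd 1 (z - 1)
    rw [mpow_one hYpd, show (1 : ℝ) + (z - 1) = z by ring] at h
    exact h.symm
  have key : (mpow X z).trace = (mpow Y z).trace * RB.trace := by
    rw [hXz]
    set P := mpow X (z - 1) with hPdef
    set Q := mpow Y (z - 1) with hQdef
    calc (X * P).trace
        = (K * (S * P * S)).trace := by
          rw [hXdef, show S * K * S * P = S * (K * S * P) from by simp only [mul_assoc],
            Matrix.trace_mul_comm,
            show K * S * P * S = K * (S * P * S) from by simp only [mul_assoc]]
      _ = (K * ((T * Q * T) ⊗ₖ (1 : Matrix nB nB ℂ))).trace := by rw [hcond]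
      _ = ((RA * (T * Q * T)) ⊗ₖ (RB * 1)).trace := by
          rw [hKkron, ← Matrix.mul_kronecker_mul]
      _ = (RA * (T * Q * T)).trace * (RB * 1).trace := Matrix.trace_kronecker _ _
      _ = (mpow Y z).trace * RB.trace := by
          rw [mul_one, hYz]
          congr 1
          rw [show RA * (T * Q * T) = RA * T * Q * T from by simp only [mul_assoc],
            Matrix.trace_mul_comm,
            show T * (RA * T * Q) = T * RA * T * Q from by simp only [mul_assoc], hYdef]
  have htA : (mpow Y z).trace = ((∑ i, hYpd.1.eigenvalues i ^ z : ℝ) : ℂ) :=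
    mpow_trace hYpd.1 z
  have htApos : (0 : ℝ) < ∑ i, hYpd.1.eigenvalues i ^ z :=
    Finset.sum_pos (fun i _ => Real.rpow_pos_of_pos (hYpd.eigenvalues_pos i) z)
      Finset.univ_nonempty
  have htB : RB.trace = ((∑ i, hρB.1.eigenvalues i ^ (α / z) : ℝ) : ℂ) := by
    rw [hRBdef]; exact mpow_trace hρB.1 _
  have htBpos : (0 : ℝ) < ∑ i, hρB.1.eigenvalues i ^ (α / z) :=
    Finset.sum_pos (fun i _ => Real.rpow_pos_of_pos (hρB.eigenvalues_pos i) _)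
      Finset.univ_nonempty
  rw [key, htA, htB, ← Complex.ofReal_mul, Complex.ofReal_re, Complex.ofReal_re,
    Complex.ofReal_re, Real.log_mul htApos.ne' htBpos.ne', mul_add]
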